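/- arXiv:1709.05719 — 2 statements merged into one kernel-verified Lean document; each statement's English description precedes it below -/
import Mathlib

section
/- Let s > d/2, s' = s - (d-m)/2, and q ∈ Emb(M,ℝ^d). Let Ex_q : H^{s'}(M,ℝ^d) → H^s(ℝ^d,ℝ^d) be any bounded linear extension operator with Tr_q∘Ex_q = Id_{H^{s'}(M,ℝ^d)}. Then the following operator identities hold: A_q = Ex_q* P_q* A P_q Ex_q, B_q = Tr_q A⁻¹ Tr_q*, and P_q = A⁻¹ Tr_q* A_q Tr_q. -/
/-!
Statement 8: the operator identities `A_q = Ex_q* P_q* A P_q Ex_q`,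
`B_q = Tr_q A⁻¹ Tr_q*` and `P_q = A⁻¹ Tr_q* A_q Tr_q` relating the Riesz isomorphisms
`A`, `A_q`, `B_q = A_q⁻¹`, the `‖·‖_A`-orthogonal projection `P_q`, and the trace and
extension operators `Tr_q`, `Ex_q`.

The Sobolev spaces `H^s(ℝ^d,ℝ^d)` and `H^{s'}(M,ℝ^d)` are modelled as abstract real
normed spaces `Hs`, `Hs'` with injective linear realizations as maps; the negative-order
spaces `H^{-s}`, `H^{-s'}` are modelled as the corresponding dual spaces, and duals of
operators are given by precomposition.  The `H^s(ℝ^d)`-norm of `Hs` is tied to the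
concrete Fourier-transform formula.
-/

open MeasureTheory Function
open scoped FourierTransform Manifold

noncomputable section

abbrev Euc (d : ℕ) := EuclideanSpace ℝ (Fin d)

/-- Componentwise complexification of a vector-valued map. -/
def cplx {d k : ℕ} (f : Euc d → Euc k) : Euc d → EuclideanSpace ℂ (Fin k) :=
  fun x => WithLp.toLp 2 (fun i => (f x i : ℂ))

/-- The Sobolev `H^s`-norm, `‖f‖_{H^s} = (∫ (1+|ξ|²)^s ‖𝓕f(ξ)‖² dξ)^{1/2}`. -/
def HsNorm {d k : ℕ} (s : ℝ) (f : Euc d → Euc k) : ℝ :=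
  Real.sqrt (∫ ξ : Euc d, (1 + ‖ξ‖ ^ 2) ^ s * ‖𝓕 (cplx f) ξ‖ ^ 2)

/-- A smooth embedding of the compact manifold `M` into `ℝ^d`. -/
def IsSmoothEmb {d : ℕ} (m : ℕ) {M : Type*} [TopologicalSpace M]
    [ChartedSpace (EuclideanSpace ℝ (Fin m)) M] (q : M → Euc d) : Prop :=
  ContMDiff (𝓡 m) 𝓘(ℝ, Euc d) (⊤ : ℕ∞) q ∧ Topology.IsEmbedding q ∧
    ∀ x, Function.Injective (mfderiv (𝓡 m) 𝓘(ℝ, Euc d) q x)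

/-- With `A` the Riesz isomorphism of `⟨·,·⟩_A` on `H^s(ℝ^d,ℝ^d)`,
`Tr_q` the trace, `Ex_q` any bounded right inverse of `Tr_q`, `P_q` the
`‖·‖_A`-orthogonal projection with kernel `ker Tr_q`, `A_q` the Riesz isomorphism of the
outer metric `G^𝒪_q` on `H^{s'}(M,ℝ^d)` and `B_q = A_q⁻¹`, the identities
`A_q = Ex_q* P_q* A P_q Ex_q`, `B_q = Tr_q A⁻¹ Tr_q*`, `P_q = A⁻¹ Tr_q* A_q Tr_q` hold. -/
theorem riesz_projection_trace_identities
    (d m : ℕ) (s s' : ℝ) (hs : (d : ℝ) / 2 < s) (hs' : s' = s - ((d : ℝ) - m) / 2)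
    (M : Type*) [TopologicalSpace M] [ChartedSpace (EuclideanSpace ℝ (Fin m)) M]
    [IsManifold (𝓡 m) ((⊤ : ℕ∞) : WithTop ℕ∞) M] [CompactSpace M]
    (q : M → Euc d) (hq : IsSmoothEmb m q)
    -- H^s(ℝ^d,ℝ^d), realized as vector fields, with norm the H^s-norm
    (Hs : Type*) [NormedAddCommGroup Hs] [NormedSpace ℝ Hs]
    (ιd : Hs →ₗ[ℝ] (Euc d → Euc d)) (hιd : Function.Injective ιd)
    (hHs : ∀ X, ‖X‖ = HsNorm s (ιd X))
    -- H^{s'}(M,ℝ^d), realized as maps M → ℝ^d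
    (Hs' : Type*) [NormedAddCommGroup Hs'] [NormedSpace ℝ Hs']
    (ιm : Hs' →ₗ[ℝ] (M → Euc d)) (hιm : Function.Injective ιm)
    -- the trace operator Tr_q : H^s(ℝ^d,ℝ^d) → H^{s'}(M,ℝ^d), X ↦ X ∘ q
    (Tr : Hs →L[ℝ] Hs') (hTr : ∀ X x, ιm (Tr X) x = ιd X (q x))
    -- a bounded linear extension operator, right inverse of the trace
    (Ex : Hs' →L[ℝ] Hs) (hEx : ∀ u, Tr (Ex u) = u)
    -- the Riesz isomorphism A of the inner product ⟨·,·⟩_A on H^s, with A X Y = ⟨X,Y⟩_A,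
    -- symmetric, positive, and with ⟨X,X⟩_A equivalent to ‖X‖²_{H^s}
    (A : Hs ≃L[ℝ] StrongDual ℝ Hs)
    (hAsymm : ∀ X Y, A X Y = A Y X)
    (CA : ℝ) (hCA : 0 < CA)
    (hAeq : ∀ X, CA⁻¹ * ‖X‖ ^ 2 ≤ A X X ∧ A X X ≤ CA * ‖X‖ ^ 2)
    -- the ‖·‖_A-orthogonal projection P_q with kernel ker Tr_q
    (P : Hs →L[ℝ] Hs)
    (hPP : ∀ X, P (P X) = P X)
    (hPker : ∀ X, P X = 0 ↔ Tr X = 0)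
    (hPorth : ∀ X Y, A (P X) (P Y) = A (P X) Y)
    -- the Riesz isomorphism A_q of the outer metric G^𝒪_q on H^{s'}(M,ℝ^d),
    -- where G^𝒪_q is the polarization of u ↦ inf { ⟨X,X⟩_A : Tr_q X = u }
    (Aq : Hs' →L[ℝ] StrongDual ℝ Hs')
    (hAq : ∀ u v : Hs', Aq u v =
      (sInf {r | ∃ X : Hs, Tr X = u + v ∧ r = A X X} -
        sInf {r | ∃ X : Hs, Tr X = u - v ∧ r = A X X}) / 4)
    -- B_q = A_q⁻¹
    (Bq : StrongDual ℝ Hs' →L[ℝ] Hs')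
    (hBqAq : ∀ u, Bq (Aq u) = u) (hAqBq : ∀ α, Aq (Bq α) = α) :
    (∀ u : Hs', Aq u = (A (P (Ex u))).comp (P.comp Ex)) ∧
    (∀ α : StrongDual ℝ Hs', Bq α = Tr (A.symm (α.comp Tr))) ∧
    (∀ X : Hs, P X = A.symm ((Aq (Tr X)).comp Tr)) := by
  -- positivity of the quadratic form
  have hApos : ∀ X : Hs, 0 ≤ A X X := fun X =>
    le_trans (by positivity) (hAeq X).1
  -- P X depends only on Tr X
  have hPeq : ∀ X Y : Hs, Tr X = Tr Y → P X = P Y := by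
    intro X Y h
    have h0 : Tr (X - Y) = 0 := by rw [map_sub, h, sub_self]
    have := (hPker (X - Y)).mpr h0
    rw [map_sub, sub_eq_zero] at this
    exact this
  -- Tr (P X) = Tr X
  have hTrP : ∀ X : Hs, Tr (P X) = Tr X := by
    intro X
    have h0 : P (X - P X) = 0 := by rw [map_sub, hPP, sub_self]
    have h1 : Tr (X - P X) = 0 := (hPker _).mp h0
    rw [map_sub, sub_eq_zero] at h1
    exact h1.symm
  -- the cross term vanishes
  have hcross : ∀ X : Hs, A (P X) (X - P X) = 0 := by
    intro X
    rw [map_sub, ← hPorth X X, sub_self]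
  -- decomposition of the quadratic form
  have hdecomp : ∀ X : Hs, A X X = A (P X) (P X) + A (X - P X) (X - P X) := by
    intro X
    have hX : X = P X + (X - P X) := by abel
    calc A X X = A (P X + (X - P X)) (P X + (X - P X)) := by rw [← hX]
      _ = A (P X) (P X) + A (X - P X) (X - P X) := by
          have c1 : A (P X) (X - P X) = 0 := hcross X
          have c2 : A (X - P X) (P X) = 0 := by rw [← hAsymm]; exact hcross X
          rw [map_add]
          simp only [ContinuousLinearMap.add_apply, map_add]
          rw [c1, c2]; ring
  -- the infimum in the outer metric
  have hInf : ∀ u : Hs', sInf {r | ∃ X : Hs, Tr X = u ∧ r = A X X}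
      = A (P (Ex u)) (P (Ex u)) := by
    intro u
    apply le_antisymm
    · apply csInf_le
      · exact ⟨0, fun r ⟨X, _, hr⟩ => hr ▸ hApos X⟩
      · exact ⟨P (Ex u), by rw [hTrP, hEx], rfl⟩
    · refine le_csInf ⟨_, ⟨Ex u, hEx u, rfl⟩⟩ ?_
      rintro r ⟨X, hX, rfl⟩
      have hPX : P X = P (Ex u) := hPeq _ _ (by rw [hX, hEx])
      have h0 := hApos (X - P X)
      rw [hPX] at h0
      rw [hdecomp X, hPX]
      linarith
  -- the bilinear formula for Aq
  have hAq2 : ∀ u v : Hs', Aq u v = A (P (Ex u)) (P (Ex v)) := by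
    intro u v
    rw [hAq, hInf, hInf]
    have h1 : P (Ex (u + v)) = P (Ex u) + P (Ex v) := by rw [map_add, map_add]
    have h2 : P (Ex (u - v)) = P (Ex u) - P (Ex v) := by rw [map_sub, map_sub]
    rw [h1, h2]
    set a := P (Ex u)
    set b := P (Ex v)
    have e1 : A (a + b) (a + b) = A a a + A a b + A b a + A b b := by
      rw [map_add]
      simp [ContinuousLinearMap.add_apply, map_add]
      ring
    have e2 : A (a - b) (a - b) = A a a - A a b - A b a + A b b := by
      rw [map_sub]
      simp [ContinuousLinearMap.sub_apply, map_sub]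
      ring
    rw [e1, e2, hAsymm b a]
    ring
  have hPEx : ∀ X : Hs, P (Ex (Tr X)) = P X := fun X => hPeq _ _ (hEx _)
  refine ⟨?_, ?_, ?_⟩
  · intro u
    ext v
    rw [hAq2]
    simp [ContinuousLinearMap.comp_apply]
  · intro α
    have key : Aq (Tr (A.symm (α.comp Tr))) = α := by
      ext v
      set Y := A.symm (α.comp Tr) with hY
      rw [hAq2, hPEx, hAsymm, hPorth, hAsymm]
      have hAY : A Y = α.comp Tr := A.apply_symm_apply _
      rw [hAY]
      simp [ContinuousLinearMap.comp_apply, hTrP, hEx]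
    calc Bq α = Bq (Aq (Tr (A.symm (α.comp Tr)))) := by rw [key]
      _ = Tr (A.symm (α.comp Tr)) := hBqAq _
  · intro X
    rw [eq_comm, ContinuousLinearEquiv.symm_apply_eq]
    ext Y
    rw [ContinuousLinearMap.comp_apply, hAq2, hPEx, hPEx, hPorth]
end
end

section
/- Let U be a metrizable topological space, E and F Banach spaces, and A : U × E → F a continuous map such that for each x ∈ U the map A_x := A(x,·) is a continuous linear isomorphism from E onto F. If the function x ↦ ‖A_x⁻¹‖_{L(F,E)} is locally bounded on U, then the map A⁻¹ : U × F → E, (x,z) ↦ A_x⁻¹ z, is continuous. -/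
/-!
Statement 11: if `A : U × E → F` is continuous, each `A_x` is a continuous linear
isomorphism `E ≃ F`, and `x ↦ ‖A_x⁻¹‖` is locally bounded, then `(x,z) ↦ A_x⁻¹ z` is
continuous.
-/

open Filter

/-- Let `U` be a metrizable topological space, `E, F` Banach spaces and
`A : U × E → F` continuous with each `A_x ∈ GL(E,F)`. If `‖A_x⁻¹‖_{L(F,E)}` is locally
bounded, then `A⁻¹ : U × F → E` is continuous. -/
theorem continuity_of_parametrized_inverse
    (U : Type*) [TopologicalSpace U] [TopologicalSpace.MetrizableSpace U]
    (E F : Type*) [NormedAddCommGroup E] [NormedSpace ℝ E] [CompleteSpace E]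
    [NormedAddCommGroup F] [NormedSpace ℝ F] [CompleteSpace F]
    (A : U → (E →L[ℝ] F))
    (hA : Continuous fun p : U × E => A p.1 p.2)
    (Ainv : U → (F →L[ℝ] E))
    (hinv_left : ∀ x : U, ∀ e : E, Ainv x (A x e) = e)
    (hinv_right : ∀ x : U, ∀ f : F, A x (Ainv x f) = f)
    (hloc : ∀ x : U, ∃ V ∈ nhds x, ∃ C : ℝ, ∀ y ∈ V, ‖Ainv y‖ ≤ C) :
    Continuous fun p : U × F => Ainv p.1 p.2 := by
  rw [continuous_iff_continuousAt]
  rintro ⟨x₀, z₀⟩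
  set e₀ : E := Ainv x₀ z₀ with he₀
  obtain ⟨V, hV, C, hC⟩ := hloc x₀
  -- the key: Ainv y z - e₀ = Ainv y (z - A y e₀)
  have key : ∀ y z, Ainv y z - e₀ = Ainv y (z - A y e₀) := by
    intro y z
    rw [map_sub, hinv_left]
  have hC0 : 0 ≤ C := le_trans (norm_nonneg _) (hC x₀ (mem_of_mem_nhds hV))
  rw [ContinuousAt, tendsto_sub_nhds_zero_iff.symm]
  have h1 : Tendsto (fun p : U × F => ‖p.2 - A p.1 e₀‖) (nhds (x₀, z₀)) (nhds 0) := by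
    have : Tendsto (fun p : U × F => p.2 - A p.1 e₀) (nhds (x₀, z₀)) (nhds (z₀ - A x₀ e₀)) := by
      exact (continuous_snd.sub ((hA.comp (continuous_fst.prodMk continuous_const)))).tendsto _
    rw [hinv_right x₀ z₀, sub_self] at this
    simpa using this.norm
  apply squeeze_zero_norm' _ (by simpa using h1.const_mul C)
  have hVmem : {p : U × F | p.1 ∈ V} ∈ nhds (x₀, z₀) := by
    exact continuous_fst.continuousAt.preimage_mem_nhds hV
  filter_upwards [hVmem] with p hp
  rw [key]
  calc ‖Ainv p.1 (p.2 - A p.1 e₀)‖ ≤ ‖Ainv p.1‖ * ‖p.2 - A p.1 e₀‖ := (Ainv p.1).le_opNorm _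
    _ ≤ C * ‖p.2 - A p.1 e₀‖ := by
        exact mul_le_mul_of_nonneg_right (hC _ hp) (norm_nonneg _)
end
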